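/- Let t ≥ 4 and define A_r = C(t,2)·(r−2)(r−3)···(r−(t−2))/r^{t−2} for integers r ≥ 2 (so A_r = C(t,2)·(r−2)_{t−3}/r^{t−2} with falling factorial). If t−1 ≤ r ≤ (3t²−5t−4)/6, then A_{r−1} < A_r. -/

import Mathlib

/-- `A_r = C(t,2)·(r−2)(r−3)⋯(r−(t−2))/r^{t−2}`. -/
noncomputable def Afun (t r : ℕ) : ℝ :=
  (t.choose 2 : ℝ) * (∏ i ∈ Finset.Icc 2 (t - 2), ((r : ℝ) - (i : ℝ))) / (r : ℝ) ^ (t - 2)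

lemma trunc (n : ℕ) (x : ℝ) (h0 : 0 ≤ x) (h1 : x ≤ 1) :
    1 - n*x + ((n:ℝ)*((n:ℝ)-1)/2)*x^2 - ((n:ℝ)*((n:ℝ)-1)*((n:ℝ)-2)/6)*x^3 ≤ (1-x)^n := by
  induction n with
  | zero => norm_num
  | succ m ih =>
    have h1x : (0:ℝ) ≤ 1 - x := by linarith
    have hb := mul_le_mul_of_nonneg_left ih h1x
    have hnn : (0:ℝ) ≤ (m:ℝ)*((m:ℝ)-1)*((m:ℝ)-2) := by
      rcases Nat.lt_or_ge m 2 with h | h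
      · interval_cases m <;> norm_num
      · have h2 : (2:ℝ) ≤ (m:ℝ) := by exact_mod_cast h
        exact mul_nonneg (mul_nonneg (by linarith) (by linarith)) (by linarith)
    have hx4 : (0:ℝ) ≤ x^4 := by positivity
    have hp : (1-x)^(m+1) = (1-x) * (1-x)^m := by ring
    push_cast
    rw [hp]
    nlinarith [mul_nonneg hnn hx4, hb]

lemma cubic (t r : ℝ) (ht : 4 ≤ t) (hr1 : t - 1 ≤ r) (hr2 : 6*r ≤ 3*t^2 - 5*t - 4) :
    (r - t + 1) * r^3 < (r-2) * (r^3 - (t-2)*r^2 + ((t-2)*(t-3)/2)*r - (t-2)*(t-3)*(t-4)/6) := by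
  have hs : 0 ≤ r - (t-1) := by linarith
  have hu : 0 ≤ (3*t^2 - 5*t - 4)/6 - r := by linarith
  have ht4 : 0 ≤ t - 4 := by linarith
  nlinarith [mul_nonneg hs hu, mul_nonneg (mul_nonneg hs hs) hu, mul_nonneg hs (mul_nonneg hu hu), mul_nonneg ht4 (mul_nonneg hs hu), mul_nonneg (mul_nonneg ht4 ht4) (mul_nonneg hs hu), mul_nonneg ht4 hs, mul_nonneg ht4 hu, sq_nonneg (r - t), mul_nonneg (mul_nonneg ht4 hs) hs, mul_nonneg (mul_nonneg ht4 hu) hu]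

lemma key (t r : ℕ) (ht : 4 ≤ t) (hr1 : t - 1 ≤ r) (hr2 : 6 * r ≤ 3 * t ^ 2 - 5 * t - 4) :
    ((r:ℝ) - t + 1) * (r:ℝ)^(t-2) < ((r:ℝ) - 2) * ((r:ℝ) - 1)^(t-2) := by
  have hT4 : (4:ℝ) ≤ (t:ℝ) := by exact_mod_cast ht
  have hR1 : (t:ℝ) - 1 ≤ (r:ℝ) := by
    have : ((t-1:ℕ):ℝ) ≤ (r:ℝ) := Nat.cast_le.mpr hr1
    rwa [Nat.cast_sub (by omega), Nat.cast_one] at this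
  have h1 : 5*t + 4 ≤ 3*t^2 := by nlinarith
  have h5t : 5*t ≤ 3*t^2 := le_trans (Nat.le_add_right _ _) h1
  have h4 : 4 ≤ 3*t^2 - 5*t := Nat.le_sub_of_add_le (by linarith)
  have hR2 : 6 * (r:ℝ) ≤ 3*(t:ℝ)^2 - 5*(t:ℝ) - 4 := by
    have h' : ((6*r:ℕ):ℝ) ≤ ((3*t^2 - 5*t - 4:ℕ):ℝ) := Nat.cast_le.mpr hr2
    rw [Nat.cast_sub h4, Nat.cast_sub h5t] at h'
    push_cast at h'
    linarith
  have hR3 : (3:ℝ) ≤ (r:ℝ) := by linarith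
  have hRpos : (0:ℝ) < (r:ℝ) := by linarith
  set x : ℝ := 1/(r:ℝ) with hxdef
  have hx0 : 0 ≤ x := by positivity
  have hx1 : x ≤ 1 := by
    rw [hxdef]; rw [div_le_one hRpos]; linarith
  have hcn : (((t-2:ℕ)):ℝ) = (t:ℝ) - 2 := by
    rw [Nat.cast_sub (by omega)]; norm_num
  have htr := trunc (t-2) x hx0 hx1
  rw [hcn] at htr
  have hc := cubic (t:ℝ) (r:ℝ) hT4 hR1 hR2
  set P : ℝ := 1 - ((t:ℝ)-2)*x + (((t:ℝ)-2)*(((t:ℝ)-2)-1)/2)*x^2 - (((t:ℝ)-2)*(((t:ℝ)-2)-1)*(((t:ℝ)-2)-2)/6)*x^3 with hPdef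
  have hPid : (r:ℝ)^3 * P = (r:ℝ)^3 - ((t:ℝ)-2)*(r:ℝ)^2 + (((t:ℝ)-2)*((t:ℝ)-3)/2)*(r:ℝ) - ((t:ℝ)-2)*((t:ℝ)-3)*((t:ℝ)-4)/6 := by
    rw [hPdef, hxdef]; field_simp; ring
  have hstep : ((r:ℝ) - t + 1) < ((r:ℝ)-2)*P := by
    have hr3 : (0:ℝ) < (r:ℝ)^3 := by positivity
    rw [← hPid] at hc
    nlinarith [hc, hr3]
  have h1x : (r:ℝ)*(1-x) = (r:ℝ) - 1 := by
    rw [hxdef]; field_simp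
  have hpow : ((r:ℝ)-1)^(t-2) = (r:ℝ)^(t-2) * (1-x)^(t-2) := by
    rw [← mul_pow, h1x]
  have hrn : (0:ℝ) < (r:ℝ)^(t-2) := by positivity
  have h2 : (0:ℝ) ≤ (r:ℝ) - 2 := by linarith
  calc ((r:ℝ) - t + 1) * (r:ℝ)^(t-2) < ((r:ℝ)-2)*P*(r:ℝ)^(t-2) := by
        exact mul_lt_mul_of_pos_right hstep hrn
    _ ≤ ((r:ℝ)-2)*(1-x)^(t-2)*(r:ℝ)^(t-2) := by
        have := mul_le_mul_of_nonneg_left htr h2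
        exact mul_le_mul_of_nonneg_right this (le_of_lt hrn)
    _ = ((r:ℝ)-2)*((r:ℝ)-1)^(t-2) := by rw [hpow]; ring

/-- For `t ≥ 4` and `t−1 ≤ r ≤ (3t²−5t−4)/6`, we have `A_{r−1} < A_r`. -/
theorem stmt7 (t r : ℕ) (ht : 4 ≤ t) (hr1 : t - 1 ≤ r) (hr2 : 6 * r ≤ 3 * t ^ 2 - 5 * t - 4) :
    Afun t (r - 1) < Afun t r := by
  have hr3 : 3 ≤ r := by omega
  have hcast : ((r-1:ℕ):ℝ) = (r:ℝ) - 1 := by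
    rw [Nat.cast_sub (by omega)]; norm_num
  have hicc : Finset.Icc 2 (t-2) = Finset.Ico 2 ((t-2)+1) := by
    rw [Finset.Ico_add_one_right_eq_Icc]
  -- decompose products
  have hprodr : (∏ i ∈ Finset.Icc 2 (t - 2), ((r : ℝ) - (i : ℝ)))
      = ((r:ℝ) - 2) * ∏ j ∈ Finset.range (t-4), ((r:ℝ) - ((j:ℝ)+3)) := by
    rw [hicc, Finset.prod_Ico_eq_prod_range]
    have : (t-2)+1-2 = (t-4)+1 := by omega
    rw [this, Finset.prod_range_succ']
    push_cast
    rw [mul_comm]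
    congr 1
    · apply Finset.prod_congr rfl
      intro j _
      ring
  have hprodr1 : (∏ i ∈ Finset.Icc 2 (t - 2), (((r:ℝ) - 1) - (i : ℝ)))
      = ((r:ℝ) - ((t:ℝ)-1)) * ∏ j ∈ Finset.range (t-4), ((r:ℝ) - ((j:ℝ)+3)) := by
    rw [hicc, Finset.prod_Ico_eq_prod_range]
    have : (t-2)+1-2 = (t-4)+1 := by omega
    rw [this, Finset.prod_range_succ]
    rw [mul_comm]
    congr 1
    · have h24 : ((2+(t-4):ℕ):ℝ) = (t:ℝ) - 2 := by
        rw [Nat.cast_add, Nat.cast_sub (by omega)]; push_cast; ring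
      rw [h24]; ring
    · apply Finset.prod_congr rfl
      intro j _
      push_cast
      ring
  have hQpos : 0 < ∏ j ∈ Finset.range (t-4), ((r:ℝ) - ((j:ℝ)+3)) := by
    apply Finset.prod_pos
    intro j hj
    have hj' : j < t - 4 := Finset.mem_range.mp hj
    have : (j:ℝ) + 3 < (t:ℝ) - 1 := by
      have : (j:ℝ) < (t:ℝ) - 4 := by
        have := Nat.cast_lt (α := ℝ).mpr hj'
        rwa [Nat.cast_sub (by omega)] at this
      linarith [this]
    have hR1 : (t:ℝ) - 1 ≤ (r:ℝ) := by
      have : ((t-1:ℕ):ℝ) ≤ (r:ℝ) := Nat.cast_le.mpr hr1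
      rwa [Nat.cast_sub (by omega), Nat.cast_one] at this
    linarith
  have hCpos : (0:ℝ) < (t.choose 2 : ℝ) := by
    exact_mod_cast Nat.choose_pos (by omega)
  have hd1 : (0:ℝ) < ((r:ℝ)-1) ^ (t-2) := by
    have : (0:ℝ) < (r:ℝ) - 1 := by
      have : (3:ℝ) ≤ (r:ℝ) := by exact_mod_cast hr3
      linarith
    positivity
  have hd2 : (0:ℝ) < (r:ℝ) ^ (t-2) := by
    have : (0:ℝ) < (r:ℝ) := by positivity
    positivity
  have hkey := key t r ht hr1 hr2
  unfold Afun
  simp only [hcast]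
  rw [hprodr, hprodr1, div_lt_div_iff₀ hd1 hd2]
  have h := mul_lt_mul_of_pos_left hkey (mul_pos hCpos hQpos)
  calc (t.choose 2 : ℝ) * (((r:ℝ) - ((t:ℝ)-1)) * ∏ j ∈ Finset.range (t-4), ((r:ℝ) - ((j:ℝ)+3))) * (r:ℝ)^(t-2)
      = ((t.choose 2 : ℝ) * ∏ j ∈ Finset.range (t-4), ((r:ℝ) - ((j:ℝ)+3))) * (((r:ℝ) - (t:ℝ) + 1) * (r:ℝ)^(t-2)) := by ring
    _ < ((t.choose 2 : ℝ) * ∏ j ∈ Finset.range (t-4), ((r:ℝ) - ((j:ℝ)+3))) * (((r:ℝ) - 2) * ((r:ℝ)-1)^(t-2)) := h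
    _ = (t.choose 2 : ℝ) * (((r:ℝ) - 2) * ∏ j ∈ Finset.range (t-4), ((r:ℝ) - ((j:ℝ)+3))) * ((r:ℝ)-1)^(t-2) := by ring
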